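/- Suppose ξ : S → ℝ satisfies ξ_s > 0 for all s ∈ S, and λ ≥ 0 is such that Σ_{s'∈S} p(s'|s,a) ξ_{s'} ≤ λ ξ_s for all s ∈ S and a ∈ A, with γλ < 1. Then the soft Bellman operator T is a contraction with respect to the weighted maximum norm: ‖TΛ − TΛ'‖_ξ ≤ γλ ‖Λ − Λ'‖_ξ for all Λ, Λ' : S×A → ℝ. -/

import Mathlib

/-- The soft Bellman operator
`[TΛ](s,a) = Σ_{s'} p(s'|s,a)(c(s,a,s') + (γ/β) log p(s'|s,a))
  − (γ²/β) Σ_{s'} p(s'|s,a) log Σ_{a'} exp(−(β/γ)Λ(s',a'))`. -/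
noncomputable def softBellman {S A : Type*} [Fintype S] [Fintype A]
    (p : S → A → S → ℝ) (c : S → A → S → ℝ) (β γ : ℝ)
    (Λ : S → A → ℝ) : S → A → ℝ :=
  fun s a =>
    (∑ s', p s a s' * (c s a s' + (γ / β) * Real.log (p s a s'))) -
      (γ ^ 2 / β) * ∑ s', p s a s' * Real.log (∑ a', Real.exp (-(β / γ) * Λ s' a'))

/-- Weighted maximum norm `‖X‖_ξ = max_{s,a} |X(s,a)| / ξ(s)`. -/
noncomputable def wnorm {S A : Type*} [Fintype S] [Fintype A] [Nonempty S] [Nonempty A]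
    (ξ : S → ℝ) (X : S → A → ℝ) : ℝ :=
  Finset.univ.sup' Finset.univ_nonempty (fun sa : S × A => |X sa.1 sa.2| / ξ sa.1)

/-- If `ξ > 0` and `Σ_{s'} p(s'|s,a) ξ(s') ≤ λ ξ(s)` with `γλ < 1`, then the soft
Bellman operator is a contraction in the weighted maximum norm `‖·‖_ξ`. -/
lemma logsumexp_diff_le {A : Type*} [Fintype A] [Nonempty A]
    (u v : A → ℝ) (M : ℝ) (hM : ∀ a, |u a - v a| ≤ M) :
    |Real.log (∑ a, Real.exp (u a)) - Real.log (∑ a, Real.exp (v a))| ≤ M := by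
  have hpos : ∀ (w : A → ℝ), 0 < ∑ a, Real.exp (w a) := fun w =>
    Finset.sum_pos (fun _ _ => Real.exp_pos _) Finset.univ_nonempty
  have step : ∀ (u v : A → ℝ), (∀ a, u a - v a ≤ M) →
      Real.log (∑ a, Real.exp (u a)) - Real.log (∑ a, Real.exp (v a)) ≤ M := by
    intro u v h
    have hsum : ∑ a, Real.exp (u a) ≤ Real.exp M * ∑ a, Real.exp (v a) := by
      rw [Finset.mul_sum]
      refine Finset.sum_le_sum fun a _ => ?_
      rw [← Real.exp_add]
      exact Real.exp_le_exp.mpr (by linarith [h a])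
    have hlog := Real.log_le_log (hpos u) hsum
    rw [Real.log_mul (Real.exp_pos M).ne' (hpos v).ne', Real.log_exp] at hlog
    linarith
  rw [abs_sub_le_iff]
  exact ⟨step u v fun a => (abs_le.mp (hM a)).2,
    step v u fun a => by have := (abs_le.mp (hM a)).1; linarith⟩

theorem softBellman_contraction_wnorm
    {S A : Type*} [Fintype S] [Fintype A] [Nonempty S] [Nonempty A]
    (p : S → A → S → ℝ) (c : S → A → S → ℝ) (β γ : ℝ)
    (hp0 : ∀ s a s', 0 ≤ p s a s') (hp1 : ∀ s a, ∑ s', p s a s' = 1)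
    (hβ : 0 < β) (hγ0 : 0 < γ) (hγ1 : γ ≤ 1)
    (ξ : S → ℝ) (hξ : ∀ s, 0 < ξ s)
    (lam : ℝ) (hlam0 : 0 ≤ lam)
    (hlam : ∀ s a, ∑ s', p s a s' * ξ s' ≤ lam * ξ s)
    (hcontr : γ * lam < 1)
    (Λ Λ' : S → A → ℝ) :
    wnorm ξ (fun s a => softBellman p c β γ Λ s a - softBellman p c β γ Λ' s a) ≤
      γ * lam * wnorm ξ (fun s a => Λ s a - Λ' s a) := by
  set N := wnorm ξ (fun s a => Λ s a - Λ' s a) with hN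
  have hNbnd : ∀ s a, |Λ s a - Λ' s a| ≤ N * ξ s := by
    intro s a
    have h := Finset.le_sup' (f := fun sa : S × A => |Λ sa.1 sa.2 - Λ' sa.1 sa.2| / ξ sa.1)
      (Finset.mem_univ (s, a))
    simpa [hN, wnorm] using (div_le_iff₀ (hξ s)).mp h
  have hN0 : 0 ≤ N := by
    obtain ⟨s⟩ := ‹Nonempty S›; obtain ⟨a⟩ := ‹Nonempty A›
    have := hNbnd s a
    nlinarith [abs_nonneg (Λ s a - Λ' s a), hξ s]
  refine Finset.sup'_le _ _ fun sa _ => ?_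
  obtain ⟨s, a⟩ := sa
  rw [div_le_iff₀ (hξ s)]
  set L : (S → A → ℝ) → S → ℝ := fun w s' =>
    Real.log (∑ a', Real.exp (-(β / γ) * w s' a')) with hL
  have heq : softBellman p c β γ Λ s a - softBellman p c β γ Λ' s a
      = (γ ^ 2 / β) * ∑ s', p s a s' * (L Λ' s' - L Λ s') := by
    simp only [softBellman, hL, mul_sub, Finset.sum_sub_distrib, Finset.mul_sum]
    ring
  have hterm : ∀ s', |L Λ' s' - L Λ s'| ≤ (β / γ) * (N * ξ s') := by
    intro s'
    refine logsumexp_diff_le _ _ _ fun a' => ?_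
    have : -(β / γ) * Λ' s' a' - -(β / γ) * Λ s' a' = (β / γ) * (Λ s' a' - Λ' s' a') := by ring
    rw [this, abs_mul, abs_of_pos (by positivity)]
    exact mul_le_mul_of_nonneg_left (hNbnd s' a') (by positivity)
  calc |softBellman p c β γ Λ s a - softBellman p c β γ Λ' s a|
      = (γ ^ 2 / β) * |∑ s', p s a s' * (L Λ' s' - L Λ s')| := by
        rw [heq, abs_mul, abs_of_nonneg (by positivity)]
    _ ≤ (γ ^ 2 / β) * ∑ s', p s a s' * ((β / γ) * (N * ξ s')) := by
        refine mul_le_mul_of_nonneg_left ?_ (by positivity)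
        refine (Finset.abs_sum_le_sum_abs _ _).trans (Finset.sum_le_sum fun s' _ => ?_)
        rw [abs_mul, abs_of_nonneg (hp0 s a s')]
        exact mul_le_mul_of_nonneg_left (hterm s') (hp0 s a s')
    _ = γ * N * ∑ s', p s a s' * ξ s' := by
        rw [Finset.mul_sum, Finset.mul_sum]
        refine Finset.sum_congr rfl fun s' _ => ?_
        field_simp
    _ ≤ γ * N * (lam * ξ s) :=
        mul_le_mul_of_nonneg_left (hlam s a) (by positivity)
    _ = γ * lam * N * ξ s := by ring
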